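/- Let φ : ℝ₊ → ℝ₊ be an increasing continuous bijection such that for some fixed α₁, α₂, β₁, β₂ > 0 with α₁ + α₂ > 1 > α₁, the inequality α₁φ⁻¹(β₁φ(s)+β₂φ(t)) + α₂φ⁻¹(β₁φ(u)+β₂φ(v)) ≤ φ⁻¹(β₁φ(α₁s+α₂u) + β₂φ(α₁t+α₂v)) holds for all s,t,u,v > 0. Then the function Φ(x₁,x₂) = φ⁻¹(β₁φ(x₁)+β₂φ(x₂)) is positively homogeneous and superadditive on ℝ₊ × ℝ₊. -/

import Mathlib

open Filter Topology Set

set_option maxHeartbeats 1000000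

theorem stmt_14 (φ φinv : ℝ → ℝ)
    (hφpos : ∀ t : ℝ, 0 < t → 0 < φ t)
    (hφmono : StrictMonoOn φ (Set.Ioi 0)) (hφcont : ContinuousOn φ (Set.Ioi 0))
    (hφsurj : φ '' Set.Ioi 0 = Set.Ioi 0)
    (hφinv : ∀ t : ℝ, 0 < t → φinv (φ t) = t)
    (hφinv' : ∀ s : ℝ, 0 < s → 0 < φinv s ∧ φ (φinv s) = s)
    (α₁ α₂ β₁ β₂ : ℝ) (hα₁ : 0 < α₁) (hα₁1 : α₁ < 1) (hα₂ : 0 < α₂)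
    (hαsum : 1 < α₁ + α₂) (hβ₁ : 0 < β₁) (hβ₂ : 0 < β₂)
    (hineq : ∀ s t u v : ℝ, 0 < s → 0 < t → 0 < u → 0 < v →
      α₁ * φinv (β₁ * φ s + β₂ * φ t) + α₂ * φinv (β₁ * φ u + β₂ * φ v) ≤
        φinv (β₁ * φ (α₁ * s + α₂ * u) + β₂ * φ (α₁ * t + α₂ * v))) :
    (∀ γ : ℝ, 0 < γ → ∀ x₁ x₂ : ℝ, 0 < x₁ → 0 < x₂ →
      φinv (β₁ * φ (γ * x₁) + β₂ * φ (γ * x₂)) = γ * φinv (β₁ * φ x₁ + β₂ * φ x₂)) ∧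
    (∀ x₁ x₂ y₁ y₂ : ℝ, 0 < x₁ → 0 < x₂ → 0 < y₁ → 0 < y₂ →
      φinv (β₁ * φ x₁ + β₂ * φ x₂) + φinv (β₁ * φ y₁ + β₂ * φ y₂) ≤
        φinv (β₁ * φ (x₁ + y₁) + β₂ * φ (x₂ + y₂))) := by
  have hα₁' : (0:ℝ) < 1 - α₁ := by linarith
  set Φ : ℝ → ℝ → ℝ := fun a b => φinv (β₁ * φ a + β₂ * φ b) with hPhidef
  have hsum : ∀ a b : ℝ, 0 < a → 0 < b → 0 < β₁ * φ a + β₂ * φ b := fun a b ha hb =>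
    add_pos (mul_pos hβ₁ (hφpos a ha)) (mul_pos hβ₂ (hφpos b hb))
  have hΦpos : ∀ a b : ℝ, 0 < a → 0 < b → 0 < Φ a b := fun a b ha hb =>
    (hφinv' _ (hsum a b ha hb)).1
  have hφΦ : ∀ a b : ℝ, 0 < a → 0 < b → φ (Φ a b) = β₁ * φ a + β₂ * φ b := fun a b ha hb =>
    (hφinv' _ (hsum a b ha hb)).2
  have hφle : ∀ s t : ℝ, 0 < s → 0 < t → φ s ≤ φ t → s ≤ t := by
    intro s t hs ht h
    by_contra hlt
    push_neg at hlt
    exact absurd h (not_le.mpr (hφmono (Set.mem_Ioi.mpr ht) (Set.mem_Ioi.mpr hs) hlt))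
  have hinvle : ∀ s t : ℝ, 0 < s → s ≤ t → φinv s ≤ φinv t := by
    intro s t hs hst
    have ht : 0 < t := lt_of_lt_of_le hs hst
    obtain ⟨h1p, h1e⟩ := hφinv' s hs
    obtain ⟨h2p, h2e⟩ := hφinv' t ht
    by_contra hlt
    push_neg at hlt
    have := hφmono (Set.mem_Ioi.mpr h2p) (Set.mem_Ioi.mpr h1p) hlt
    rw [h1e, h2e] at this
    linarith
  -- monotonicity of Φ along rays
  have hΦmono : ∀ l ρ a b : ℝ, 0 < l → l ≤ ρ → 0 < a → 0 < b →
      Φ (l * a) (l * b) ≤ Φ (ρ * a) (ρ * b) := by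
    intro l ρ a b hl hlρ ha hb
    have hρ : 0 < ρ := lt_of_lt_of_le hl hlρ
    have h1 : φ (l * a) ≤ φ (ρ * a) := hφmono.monotoneOn (Set.mem_Ioi.mpr (mul_pos hl ha))
      (Set.mem_Ioi.mpr (mul_pos hρ ha)) (mul_le_mul_of_nonneg_right hlρ ha.le)
    have h2 : φ (l * b) ≤ φ (ρ * b) := hφmono.monotoneOn (Set.mem_Ioi.mpr (mul_pos hl hb))
      (Set.mem_Ioi.mpr (mul_pos hρ hb)) (mul_le_mul_of_nonneg_right hlρ hb.le)
    exact hinvle _ _ (hsum _ _ (mul_pos hl ha) (mul_pos hl hb))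
      (by nlinarith)
  -- the semigroup G
  set G : Set ℝ := {l | 0 < l ∧ ∀ a b : ℝ, 0 < a → 0 < b → l * Φ a b ≤ Φ (l * a) (l * b)}
    with hGdef
  have hone : (1:ℝ) ∈ G := by
    refine ⟨one_pos, ?_⟩
    intro a b ha hb
    simp
  have hmul : ∀ l k : ℝ, l ∈ G → k ∈ G → l * k ∈ G := by
    intro l k hl hk
    refine ⟨mul_pos hl.1 hk.1, ?_⟩
    intro a b ha hb
    have h1 := hk.2 a b ha hb
    have h2 := hl.2 (k * a) (k * b) (mul_pos hk.1 ha) (mul_pos hk.1 hb)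
    have h3 : l * (k * Φ a b) ≤ l * Φ (k * a) (k * b) :=
      mul_le_mul_of_nonneg_left h1 hl.1.le
    calc l * k * Φ a b = l * (k * Φ a b) := by ring
      _ ≤ l * Φ (k * a) (k * b) := h3
      _ ≤ Φ (l * (k * a)) (l * (k * b)) := h2
      _ = Φ (l * k * a) (l * k * b) := by rw [mul_assoc, mul_assoc]
  have hpow : ∀ l : ℝ, l ∈ G → ∀ m : ℕ, l ^ m ∈ G := by
    intro l hl m
    induction m with
    | zero => simpa using hone
    | succ k ih => rw [pow_succ]; exact hmul _ _ ih hl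
  have hT : ∀ l k : ℝ, l ∈ G → k ∈ G → α₁ * l + α₂ * k ∈ G := by
    intro l k hl hk
    refine ⟨add_pos (mul_pos hα₁ hl.1) (mul_pos hα₂ hk.1), ?_⟩
    intro a b ha hb
    have h := hineq (l * a) (l * b) (k * a) (k * b) (mul_pos hl.1 ha) (mul_pos hl.1 hb)
      (mul_pos hk.1 ha) (mul_pos hk.1 hb)
    have h1 := hl.2 a b ha hb
    have h2 := hk.2 a b ha hb
    have e1 : α₁ * (l * a) + α₂ * (k * a) = (α₁ * l + α₂ * k) * a := by ring
    have e2 : α₁ * (l * b) + α₂ * (k * b) = (α₁ * l + α₂ * k) * b := by ring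
    rw [e1, e2] at h
    calc (α₁ * l + α₂ * k) * Φ a b = α₁ * (l * Φ a b) + α₂ * (k * Φ a b) := by ring
      _ ≤ α₁ * Φ (l * a) (l * b) + α₂ * Φ (k * a) (k * b) := by
          have := mul_le_mul_of_nonneg_left h1 hα₁.le
          have := mul_le_mul_of_nonneg_left h2 hα₂.le
          linarith
      _ ≤ Φ ((α₁ * l + α₂ * k) * a) ((α₁ * l + α₂ * k) * b) := h
  -- α₁ ∈ G via a limit argument
  have hα₁G : α₁ ∈ G := by
    refine ⟨hα₁, ?_⟩
    intro a b ha hb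
    have hkey : φ (α₁ * Φ a b) ≤ β₁ * φ (α₁ * a) + β₂ * φ (α₁ * b) := by
      have hev : ∀ᶠ w in 𝓝[>] (0:ℝ),
          φ (α₁ * Φ a b) ≤ β₁ * φ (α₁ * a + α₂ * w) + β₂ * φ (α₁ * b + α₂ * w) := by
        filter_upwards [self_mem_nhdsWithin] with w hw
        have hw' : 0 < w := hw
        have h := hineq a b w w ha hb hw' hw'
        have hΦw := hΦpos w w hw' hw'
        have hx : 0 < α₁ * a + α₂ * w := by positivity
        have hy : 0 < α₁ * b + α₂ * w := by positivity
        have h1 : α₁ * Φ a b ≤ Φ (α₁ * a + α₂ * w) (α₁ * b + α₂ * w) := by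
          have : 0 < α₂ * Φ w w := mul_pos hα₂ hΦw
          linarith [h]
        have h2 : φ (α₁ * Φ a b) ≤ φ (Φ (α₁ * a + α₂ * w) (α₁ * b + α₂ * w)) :=
          hφmono.monotoneOn (Set.mem_Ioi.mpr (mul_pos hα₁ (hΦpos a b ha hb)))
            (Set.mem_Ioi.mpr (hΦpos _ _ hx hy)) h1
        rwa [hφΦ _ _ hx hy] at h2
      have tfun : ∀ z : ℝ, 0 < z → Tendsto (fun w : ℝ => z + α₂ * w) (𝓝[>] (0:ℝ))
          (𝓝[Set.Ioi 0] z) := by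
        intro z hz
        apply tendsto_nhdsWithin_of_tendsto_nhds_of_eventually_within
        · have hcont : Continuous (fun w : ℝ => z + α₂ * w) :=
            continuous_const.add (continuous_const.mul continuous_id)
          have := hcont.tendsto 0
          simp only [mul_zero, add_zero] at this
          exact this.mono_left nhdsWithin_le_nhds
        · filter_upwards [self_mem_nhdsWithin] with w hw
          have : 0 < w := hw
          exact Set.mem_Ioi.mpr (by positivity)
      have ta : Tendsto (fun w : ℝ => φ (α₁ * a + α₂ * w)) (𝓝[>] (0:ℝ)) (𝓝 (φ (α₁ * a))) :=
        Filter.Tendsto.comp (hφcont _ (Set.mem_Ioi.mpr (by positivity : (0:ℝ) < α₁ * a)))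
          (tfun (α₁ * a) (by positivity))
      have tb : Tendsto (fun w : ℝ => φ (α₁ * b + α₂ * w)) (𝓝[>] (0:ℝ)) (𝓝 (φ (α₁ * b))) :=
        Filter.Tendsto.comp (hφcont _ (Set.mem_Ioi.mpr (by positivity : (0:ℝ) < α₁ * b)))
          (tfun (α₁ * b) (by positivity))
      have hlim : Tendsto (fun w : ℝ => β₁ * φ (α₁ * a + α₂ * w) + β₂ * φ (α₁ * b + α₂ * w))
          (𝓝[>] (0:ℝ)) (𝓝 (β₁ * φ (α₁ * a) + β₂ * φ (α₁ * b))) :=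
        ((ta.const_mul β₁).add (tb.const_mul β₂))
      exact ge_of_tendsto hlim hev
    have he := hφΦ (α₁ * a) (α₁ * b) (mul_pos hα₁ ha) (mul_pos hα₁ hb)
    have h2 : φ (α₁ * Φ a b) ≤ φ (Φ (α₁ * a) (α₁ * b)) := by rw [he]; exact hkey
    exact hφle _ _ (mul_pos hα₁ (hΦpos a b ha hb)) (hΦpos _ _ (mul_pos hα₁ ha)
      (mul_pos hα₁ hb)) h2
  -- the sequence θ n
  set ν : ℝ := α₂ / (1 - α₁) with hνdef
  have hν1 : 1 < ν := by
    rw [hνdef, lt_div_iff₀ hα₁']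
    linarith
  have hνe : ν * (1 - α₁) = α₂ := by
    rw [hνdef]; field_simp
  set θ : ℕ → ℝ := fun m => ν - (ν - 1) * α₁ ^ m with hθdef
  have hθ1 : ∀ m : ℕ, 1 ≤ θ m := by
    intro m
    have h1 : α₁ ^ m ≤ 1 := pow_le_one₀ hα₁.le hα₁1.le
    have h2 : (ν - 1) * α₁ ^ m ≤ (ν - 1) * 1 := by
      apply mul_le_mul_of_nonneg_left h1 (by linarith)
    simp only [hθdef]
    linarith
  have hθpos : ∀ m : ℕ, 0 < θ m := fun m => lt_of_lt_of_le one_pos (hθ1 m)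
  have hθstep : ∀ m : ℕ, θ (m + 1) - θ m = (ν - 1) * (1 - α₁) * α₁ ^ m := by
    intro m
    simp only [hθdef]
    ring
  have hθlt : ∀ m : ℕ, θ m < θ (m + 1) := by
    intro m
    have h := hθstep m
    have hp : 0 < (ν - 1) * (1 - α₁) * α₁ ^ m :=
      mul_pos (mul_pos (by linarith) hα₁') (pow_pos hα₁ m)
    linarith
  have hθG : ∀ m : ℕ, θ m ∈ G := by
    intro m
    induction m with
    | zero =>
      have : θ 0 = 1 := by simp [hθdef]
      rw [this]; exact hone
    | succ k ih =>
      have h := hT _ _ ih hone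
      have e : α₁ * θ k + α₂ * 1 = θ (k + 1) := by
        simp only [hθdef]
        linear_combination (-1 : ℝ) * hνe
      rwa [e] at h
  have hθc : ∀ m : ℕ, 1 ≤ m → α₁ + α₂ ≤ θ m := by
    intro m hm
    have h1 : θ 1 = α₁ + α₂ := by
      simp only [hθdef, pow_one]
      linear_combination hνe
    have h2 : α₁ ^ m ≤ α₁ ^ 1 := pow_le_pow_of_le_one hα₁.le hα₁1.le hm
    have h3 : (ν - 1) * α₁ ^ m ≤ (ν - 1) * α₁ ^ 1 :=
      mul_le_mul_of_nonneg_left h2 (by linarith)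
    simp only [pow_one] at h3
    have h4 : θ 1 ≤ θ m := by
      simp only [hθdef, pow_one]
      linarith
    linarith
  -- density of G
  have hdens : ∀ lo γ : ℝ, 0 < lo → lo < γ → ∃ l, l ∈ G ∧ lo < l ∧ l ≤ γ := by
    intro lo γ hlo hloγ
    set X : ℝ := Real.log γ with hXdef
    set ε : ℝ := Real.log γ - Real.log lo with hεdef
    have hεpos : 0 < ε := sub_pos.mpr (Real.log_lt_log hlo hloγ)
    have hc1 : (1:ℝ) < α₁ + α₂ := hαsum
    have hlogc : 0 < Real.log (α₁ + α₂) := Real.log_pos hc1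
    set δ : ℝ := min ε (Real.log (α₁ + α₂)) with hδdef
    have hδpos : 0 < δ := lt_min hεpos hlogc
    -- choose n ≥ 1 with step small
    have hfact : 0 < (ν - 1) * (1 - α₁) := by nlinarith
    obtain ⟨n₀, hn₀⟩ := exists_pow_lt_of_lt_one (div_pos hδpos hfact) hα₁1
    set n : ℕ := max n₀ 1 with hndef
    have hn1 : 1 ≤ n := le_max_right _ _
    have hstep : θ (n + 1) - θ n < δ := by
      rw [hθstep n]
      have h1 : α₁ ^ n ≤ α₁ ^ n₀ := pow_le_pow_of_le_one hα₁.le hα₁1.le (le_max_left _ _)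
      have h2 : α₁ ^ n < δ / ((ν - 1) * (1 - α₁)) := lt_of_le_of_lt h1 hn₀
      rw [lt_div_iff₀ hfact] at h2
      nlinarith
    set D : ℝ := Real.log (θ (n + 1)) - Real.log (θ n) with hDdef
    have hD0 : 0 < D := sub_pos.mpr (Real.log_lt_log (hθpos n) (hθlt n))
    have hDle : D ≤ θ (n + 1) - θ n := by
      have h1 : Real.log (θ (n + 1) / θ n) ≤ θ (n + 1) / θ n - 1 :=
        Real.log_le_sub_one_of_pos (div_pos (hθpos (n+1)) (hθpos n))
      have h2 : Real.log (θ (n + 1)) - Real.log (θ n) = Real.log (θ (n + 1) / θ n) :=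
        (Real.log_div (hθpos (n+1)).ne' (hθpos n).ne').symm
      have key : ∀ A B : ℝ, B ≠ 0 → A / B - 1 = (A - B) / B := by
        intro A B hB
        rw [sub_div, div_self hB]
      have h3 : θ (n + 1) / θ n - 1 = (θ (n + 1) - θ n) / θ n := key _ _ (hθpos n).ne'
      have h4 : (θ (n + 1) - θ n) / θ n ≤ θ (n + 1) - θ n :=
        div_le_self (by linarith [hθlt n]) (hθ1 n)
      rw [hDdef]
      calc Real.log (θ (n + 1)) - Real.log (θ n) = Real.log (θ (n + 1) / θ n) := h2
        _ ≤ θ (n + 1) / θ n - 1 := h1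
        _ = (θ (n + 1) - θ n) / θ n := h3
        _ ≤ θ (n + 1) - θ n := h4
    have hDδ : D < δ := lt_of_le_of_lt hDle hstep
    have hDε : D < ε := lt_of_lt_of_le hDδ (min_le_left _ _)
    set L : ℝ := Real.log (θ n) with hLdef
    have hL : Real.log (α₁ + α₂) ≤ L := by
      apply Real.log_le_log (by positivity)
      exact hθc n hn1
    have hLpos : 0 < L := lt_of_lt_of_le hlogc hL
    have hDL : D < L := lt_of_lt_of_le (lt_of_lt_of_le hDδ (min_le_right _ _)) hL
    set A : ℝ := -Real.log α₁ with hAdef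
    have hApos : 0 < A := by
      have := Real.log_neg hα₁ hα₁1
      simp only [hAdef]
      linarith
    -- choose P
    set P : ℕ := max ⌈(L + A) / D⌉₊ (⌈X / L⌉₊ + 1) with hPdef
    have hP1 : (L + A) / D ≤ (P:ℝ) := by
      refine le_trans (Nat.le_ceil _) ?_
      exact_mod_cast Nat.cast_le.mpr (le_max_left _ _)
    have hP2 : X < (P:ℝ) * L := by
      have h1 : X / L ≤ (⌈X / L⌉₊ : ℝ) := Nat.le_ceil _
      have h2 : (⌈X / L⌉₊ : ℝ) < (P:ℝ) := by
        have : ⌈X / L⌉₊ < P := lt_of_lt_of_le (Nat.lt_succ_self _) (le_max_right _ _)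
        exact_mod_cast this
      have h3 : X / L < (P:ℝ) := lt_of_le_of_lt h1 h2
      rwa [div_lt_iff₀ hLpos] at h3
    -- choose r
    set r : ℕ := ⌈((P:ℝ) * L - X) / A⌉₊ with hrdef
    have hrnn : 0 ≤ ((P:ℝ) * L - X) / A := div_nonneg (by linarith) hApos.le
    have hr1 : ((P:ℝ) * L - X) / A ≤ (r:ℝ) := Nat.le_ceil _
    have hr2 : (r:ℝ) < ((P:ℝ) * L - X) / A + 1 := Nat.ceil_lt_add_one hrnn
    set s₀ : ℝ := (P:ℝ) * L - (r:ℝ) * A with hs₀def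
    have hs₀le : s₀ ≤ X := by
      rw [div_le_iff₀ hApos] at hr1
      simp only [hs₀def]
      linarith
    have hs₀gt : X - A < s₀ := by
      have hQA : ((P:ℝ) * L - X) / A * A = (P:ℝ) * L - X := div_mul_cancel₀ _ hApos.ne'
      have h := mul_lt_mul_of_pos_right hr2 hApos
      simp only [hs₀def]
      nlinarith
    -- choose q'
    have hq' : ∃ q' : ℕ, q' ≤ P ∧ X - ε < s₀ + (q':ℝ) * D ∧ s₀ + (q':ℝ) * D ≤ X := by
      by_cases hcase : X - ε < s₀
      · exact ⟨0, Nat.zero_le _, by simpa using hcase, by simpa using hs₀le⟩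
      · push_neg at hcase
        set m : ℕ := ⌊(X - ε - s₀) / D⌋₊ with hmdef
        have hargnn : 0 ≤ (X - ε - s₀) / D := div_nonneg (by linarith) hD0.le
        have hm1 : (m:ℝ) ≤ (X - ε - s₀) / D := Nat.floor_le hargnn
        have hm2 : (X - ε - s₀) / D < (m:ℝ) + 1 := Nat.lt_floor_add_one _
        have hmD : (m:ℝ) * D ≤ X - ε - s₀ := by
          rw [le_div_iff₀ hD0] at hm1
          linarith
        have hmDA : (m:ℝ) * D < A := by linarith
        refine ⟨m + 1, ?_, ?_, ?_⟩
        · -- capacity : m + 1 ≤ P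
          have hPD : L + A ≤ (P:ℝ) * D := by
            rw [div_le_iff₀ hD0] at hP1
            linarith
          have hlt : ((m:ℝ) + 1) * D < (P:ℝ) * D := by nlinarith
          have hltP : (m:ℝ) + 1 < (P:ℝ) := (mul_lt_mul_iff_of_pos_right hD0).mp hlt
          have : ((m + 1 : ℕ) : ℝ) < (P:ℝ) := by push_cast; linarith
          exact le_of_lt (by exact_mod_cast this)
        · have h5 : X - ε - s₀ < ((m:ℝ) + 1) * D := by
            rw [div_lt_iff₀ hD0] at hm2
            linarith
          push_cast
          linarith
        · push_cast
          linarith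
    obtain ⟨q', hq'P, hwin1, hwin2⟩ := hq'
    -- assemble l
    set l : ℝ := α₁ ^ r * (θ n ^ (P - q') * θ (n + 1) ^ q') with hldef
    have hlG : l ∈ G := hmul _ _ (hpow _ hα₁G r)
      (hmul _ _ (hpow _ (hθG n) (P - q')) (hpow _ (hθG (n+1)) q'))
    have hlpos : 0 < l := hlG.1
    have hlog : Real.log l = s₀ + (q':ℝ) * D := by
      have hθn := hθpos n
      have hθn1 := hθpos (n+1)
      rw [hldef, Real.log_mul (by positivity) (by positivity),
        Real.log_mul (by positivity) (by positivity), Real.log_pow, Real.log_pow,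
        Real.log_pow]
      have hcast : ((P - q' : ℕ) : ℝ) = (P:ℝ) - (q':ℝ) := Nat.cast_sub hq'P
      rw [hcast]
      have hlogθ1 : Real.log (θ (n+1)) = L + D := by simp only [hDdef, hLdef]; ring
      rw [hlogθ1]
      simp only [hs₀def, hAdef, hLdef]
      ring
    refine ⟨l, hlG, ?_, ?_⟩
    · have h1 : Real.log lo < Real.log l := by
        rw [hlog]
        have : Real.log lo = X - ε := by simp only [hXdef, hεdef]; ring
        linarith
      calc lo = Real.exp (Real.log lo) := (Real.exp_log hlo).symm
        _ < Real.exp (Real.log l) := Real.exp_lt_exp.mpr h1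
        _ = l := Real.exp_log hlpos
    · have h1 : Real.log l ≤ Real.log γ := by rw [hlog]; exact hwin2
      calc l = Real.exp (Real.log l) := (Real.exp_log hlpos).symm
        _ ≤ Real.exp (Real.log γ) := Real.exp_le_exp.mpr h1
        _ = γ := Real.exp_log (lt_trans hlo hloγ)
  -- the scaling inequality, both directions
  have hR1 : ∀ γ : ℝ, 0 < γ → ∀ a b : ℝ, 0 < a → 0 < b → γ * Φ a b ≤ Φ (γ * a) (γ * b) := by
    intro γ hγ a b ha hb
    by_contra hcon
    push_neg at hcon
    have hΦab := hΦpos a b ha hb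
    have hΦγ := hΦpos (γ * a) (γ * b) (mul_pos hγ ha) (mul_pos hγ hb)
    set lo : ℝ := Φ (γ * a) (γ * b) / Φ a b with hlodef
    have hlopos : 0 < lo := div_pos hΦγ hΦab
    have hloγ : lo < γ := by
      rw [hlodef, div_lt_iff₀ hΦab]
      linarith
    obtain ⟨l, hlG, hlol, hlγ⟩ := hdens lo γ hlopos hloγ
    have h1 : l * Φ a b ≤ Φ (l * a) (l * b) := hlG.2 a b ha hb
    have h2 : Φ (l * a) (l * b) ≤ Φ (γ * a) (γ * b) := hΦmono l γ a b hlG.1 hlγ ha hb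
    have h3 : Φ (γ * a) (γ * b) = lo * Φ a b := by
      rw [hlodef, div_mul_cancel₀]
      exact hΦab.ne'
    nlinarith
  have hHom : ∀ γ : ℝ, 0 < γ → ∀ a b : ℝ, 0 < a → 0 < b →
      Φ (γ * a) (γ * b) = γ * Φ a b := by
    intro γ hγ a b ha hb
    have h1 := hR1 γ hγ a b ha hb
    have h2 := hR1 (1/γ) (by positivity) (γ * a) (γ * b) (mul_pos hγ ha) (mul_pos hγ hb)
    have e1 : (1/γ) * (γ * a) = a := by field_simp
    have e2 : (1/γ) * (γ * b) = b := by field_simp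
    rw [e1, e2] at h2
    have h3 : Φ (γ * a) (γ * b) ≤ γ * Φ a b := by
      have := mul_le_mul_of_nonneg_left h2 hγ.le
      rw [mul_comm γ ((1/γ) * Φ (γ * a) (γ * b))] at this
      field_simp at this ⊢
      linarith
    linarith
  constructor
  · intro γ hγ x₁ x₂ hx₁ hx₂
    exact hHom γ hγ x₁ x₂ hx₁ hx₂
  · intro x₁ x₂ y₁ y₂ hx₁ hx₂ hy₁ hy₂
    have h := hineq (x₁/α₁) (x₂/α₁) (y₁/α₂) (y₂/α₂) (by positivity) (by positivity)
      (by positivity) (by positivity)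
    have e1 : α₁ * (x₁/α₁) + α₂ * (y₁/α₂) = x₁ + y₁ := by field_simp
    have e2 : α₁ * (x₂/α₁) + α₂ * (y₂/α₂) = x₂ + y₂ := by field_simp
    rw [e1, e2] at h
    have hh1 : Φ (x₁/α₁) (x₂/α₁) = (1/α₁) * Φ x₁ x₂ := by
      have := hHom (1/α₁) (by positivity) x₁ x₂ hx₁ hx₂
      rw [show (1/α₁) * x₁ = x₁/α₁ by ring, show (1/α₁) * x₂ = x₂/α₁ by ring] at this
      exact this
    have hh2 : Φ (y₁/α₂) (y₂/α₂) = (1/α₂) * Φ y₁ y₂ := by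
      have := hHom (1/α₂) (by positivity) y₁ y₂ hy₁ hy₂
      rw [show (1/α₂) * y₁ = y₁/α₂ by ring, show (1/α₂) * y₂ = y₂/α₂ by ring] at this
      exact this
    have hA1 : α₁ * Φ (x₁/α₁) (x₂/α₁) = Φ x₁ x₂ := by
      rw [hh1]; field_simp
    have hA2 : α₂ * Φ (y₁/α₂) (y₂/α₂) = Φ y₁ y₂ := by
      rw [hh2]; field_simp
    calc Φ x₁ x₂ + Φ y₁ y₂ = α₁ * Φ (x₁/α₁) (x₂/α₁) + α₂ * Φ (y₁/α₂) (y₂/α₂) := by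
          rw [hA1, hA2]
      _ ≤ Φ (x₁ + y₁) (x₂ + y₂) := h
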